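/- For each fixed 0 < r < 1, the map c ↦ arccos(2b(c)/(1+b(c)²)) is strictly decreasing on (0, 1−r), where b(c) ∈ (0,1) is determined together with a(c) ∈ (0,1) by the equations c = b(1−a²)/(1−a²b²) and r = a(1−b²)/(1−a²b²); moreover arccos(2b/(1+b²)) → π/2 as c → 0 and arccos(2b/(1+b²)) → 0 as c → 1−r. -/

import Mathlib

open Real Set Filter Topology

theorem stmt_12 (r : ℝ) (hr0 : 0 < r) (hr1 : r < 1)
    (a b : ℝ → ℝ)
    (hab : ∀ c ∈ Set.Ioo (0:ℝ) (1 - r),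
      a c ∈ Set.Ioo (0:ℝ) 1 ∧ b c ∈ Set.Ioo (0:ℝ) 1 ∧
      c = b c * (1 - (a c)^2) / (1 - (a c)^2 * (b c)^2) ∧
      r = a c * (1 - (b c)^2) / (1 - (a c)^2 * (b c)^2)) :
    StrictAntiOn (fun c => Real.arccos (2 * b c / (1 + (b c)^2))) (Set.Ioo 0 (1 - r)) ∧
    Tendsto (fun c => Real.arccos (2 * b c / (1 + (b c)^2)))
      (𝓝[Set.Ioo (0:ℝ) (1 - r)] 0) (𝓝 (π/2)) ∧
    Tendsto (fun c => Real.arccos (2 * b c / (1 + (b c)^2)))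
      (𝓝[Set.Ioo (0:ℝ) (1 - r)] (1 - r)) (𝓝 0) := by
  have hr2 : (0:ℝ) < 1 - r := by linarith
  -- Key algebraic identity: 2 b / (1 + b²) = 2 c / (1 + c² - r²)
  have key : ∀ c ∈ Set.Ioo (0:ℝ) (1 - r),
      2 * b c / (1 + (b c)^2) = 2 * c / (1 + c^2 - r^2) := by
    intro c hc
    obtain ⟨⟨hA0, hA1⟩, ⟨hB0, hB1⟩, hc', hr'⟩ := hab c hc
    set A := a c with hA
    set B := b c with hB
    have hAB1 : A * B < 1 := by nlinarith [mul_pos (sub_pos.2 hA1) hB0]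
    have hDpos : (0:ℝ) < 1 - A^2 * B^2 := by nlinarith [mul_pos hA0 hB0]
    have hD : (1 : ℝ) - A^2 * B^2 ≠ 0 := hDpos.ne'
    have hA2 : (1:ℝ) - A^2 ≠ 0 := by nlinarith
    have h1 : (0:ℝ) < 1 + B^2 := by positivity
    have e1 : 1 + c^2 - r^2 = (1 - A^2) * (1 + B^2) / (1 - A^2 * B^2) := by
      rw [hc', hr']
      rw [div_pow, div_pow, add_sub_assoc, div_sub_div_same, one_add_div (pow_ne_zero 2 hD), div_eq_div_iff (pow_ne_zero 2 hD) hD]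
      ring
    rw [e1, hc']
    rw [div_eq_div_iff h1.ne' (by positivity : ((1 - A ^ 2) * (1 + B ^ 2) / (1 - A ^ 2 * B ^ 2) : ℝ) ≠ 0)]
    field_simp
  -- bounds for the explicit function
  have hfden : ∀ c ∈ Set.Ioo (0:ℝ) (1 - r), (0:ℝ) < 1 + c^2 - r^2 := by
    intro c hc; nlinarith [hc.1, hc.2]
  have hf01 : ∀ c ∈ Set.Ioo (0:ℝ) (1 - r),
      0 ≤ 2 * c / (1 + c^2 - r^2) ∧ 2 * c / (1 + c^2 - r^2) ≤ 1 := by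
    intro c hc
    have hd := hfden c hc
    constructor
    · exact div_nonneg (by linarith [hc.1]) hd.le
    · rw [div_le_one hd]; nlinarith [hc.1, hc.2]
  refine ⟨?_, ?_, ?_⟩
  · -- strict antitonicity
    intro x hx y hy hxy
    simp only
    rw [key x hx, key y hy]
    have hdx := hfden x hx
    have hdy := hfden y hy
    have h1 := hf01 x hx
    have h2 := hf01 y hy
    apply Real.strictAntiOn_arccos ⟨by linarith [h1.1], h1.2⟩ ⟨by linarith [h2.1], h2.2⟩
    rw [div_lt_div_iff₀ hdx hdy]
    have hkey : x * y + r^2 < 1 := by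
      nlinarith [mul_lt_mul'' hx.2 hy.2 hx.1.le hy.1.le]
    nlinarith [mul_pos (sub_pos.2 hxy) (by linarith : (0:ℝ) < 1 - x*y - r^2)]
  · -- limit at 0
    have hcont : Tendsto (fun c : ℝ => Real.arccos (2 * c / (1 + c^2 - r^2)))
        (𝓝 0) (𝓝 (π/2)) := by
      have hval : Real.arccos (2 * 0 / (1 + (0:ℝ)^2 - r^2)) = π/2 := by
        norm_num
      rw [← hval]
      apply ContinuousAt.tendsto
      apply Real.continuous_arccos.continuousAt.comp
      apply ContinuousAt.div (by fun_prop) (by fun_prop)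
      nlinarith
    apply Tendsto.congr' _ (hcont.mono_left nhdsWithin_le_nhds)
    filter_upwards [self_mem_nhdsWithin] with c hc
    rw [key c hc]
  · -- limit at 1 - r
    have hcont : Tendsto (fun c : ℝ => Real.arccos (2 * c / (1 + c^2 - r^2)))
        (𝓝 (1 - r)) (𝓝 0) := by
      have hval : Real.arccos (2 * (1 - r) / (1 + (1 - r)^2 - r^2)) = 0 := by
        have : 2 * (1 - r) / (1 + (1 - r)^2 - r^2) = 1 := by
          rw [div_eq_one_iff_eq (by nlinarith)]; ring
        rw [this, Real.arccos_one]
      rw [← hval]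
      apply ContinuousAt.tendsto
      apply Real.continuous_arccos.continuousAt.comp
      apply ContinuousAt.div (by fun_prop) (by fun_prop)
      nlinarith
    apply Tendsto.congr' _ (hcont.mono_left nhdsWithin_le_nhds)
    filter_upwards [self_mem_nhdsWithin] with c hc
    rw [key c hc]
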